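/- Let Γ ≤ S₁₁ be generated by (1 2), (3 4), (5 6), (8 9), (10 11). The unique maximal Γ-orbit of T₇ equals the set of all scales of the form {0, a₁, a₂, a₃, 7, a₄, a₅} where a₁ ∈ {1,2}, a₂ ∈ {3,4}, a₃ ∈ {5,6}, a₄ ∈ {8,9}, a₅ ∈ {10,11}; this set has exactly 32 elements. -/
import Mathlib

set_option maxRecDepth 40000
set_option maxHeartbeats 4000000

/-- The subgroup Γ of S₁₁ (permutations of ℤ₁₂ fixing 0) generated by
(1 2), (3 4), (5 6), (8 9), (10 11). -/
def Gamma : Subgroup (Equiv.Perm (ZMod 12)) :=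
  Subgroup.closure {Equiv.swap 1 2, Equiv.swap 3 4, Equiv.swap 5 6,
    Equiv.swap 8 9, Equiv.swap 10 11}

/-- The Γ-orbit of a scale s, where permutations act elementwise. -/
def gammaOrbit (s : Finset (ZMod 12)) : Set (Finset (ZMod 12)) :=
  {t | ∃ σ ∈ Gamma, t = s.image ⇑σ}

/-- The 32 scales {0, a₁, a₂, a₃, 7, a₄, a₅} with a₁ ∈ {1,2}, a₂ ∈ {3,4}, a₃ ∈ {5,6},
a₄ ∈ {8,9}, a₅ ∈ {10,11} (the 32 thāts). -/
def thats : Set (Finset (ZMod 12)) :=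
  {u | ∃ a₁ a₂ a₃ a₄ a₅ : ZMod 12,
    (a₁ = 1 ∨ a₁ = 2) ∧ (a₂ = 3 ∨ a₂ = 4) ∧ (a₃ = 5 ∨ a₃ = 6) ∧
    (a₄ = 8 ∨ a₄ = 9) ∧ (a₅ = 10 ∨ a₅ = 11) ∧
    u = ({0, a₁, a₂, a₃, 7, a₄, a₅} : Finset (ZMod 12))}

/- ### Auxiliary definitions -/

abbrev B5 := Bool × Bool × Bool × Bool × Bool

def f (b : B5) : Equiv.Perm (ZMod 12) :=
  (cond b.1 (Equiv.swap 1 2) 1) * (cond b.2.1 (Equiv.swap 3 4) 1) *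
  (cond b.2.2.1 (Equiv.swap 5 6) 1) * (cond b.2.2.2.1 (Equiv.swap 8 9) 1) *
  (cond b.2.2.2.2 (Equiv.swap 10 11) 1)

def bx (b c : B5) : B5 :=
  (xor b.1 c.1, xor b.2.1 c.2.1, xor b.2.2.1 c.2.2.1, xor b.2.2.2.1 c.2.2.2.1,
    xor b.2.2.2.2 c.2.2.2.2)

theorem fmul : ∀ b c : B5, f b * f c = f (bx b c) := by decide

theorem f_one : f (false, false, false, false, false) = 1 := by decide

theorem finv (b : B5) : (f b)⁻¹ = f b := by
  have h : f b * f b = 1 := by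
    rw [fmul]
    have : bx b b = (false, false, false, false, false) := by
      rcases b with ⟨b1, b2, b3, b4, b5⟩; simp [bx]
    rw [this, f_one]
  exact inv_eq_of_mul_eq_one_right h

theorem f_mem (b : B5) : f b ∈ Gamma := by
  rcases b with ⟨b1, b2, b3, b4, b5⟩
  refine mul_mem (mul_mem (mul_mem (mul_mem ?_ ?_) ?_) ?_) ?_
  · cases b1
    · exact one_mem _
    · exact Subgroup.subset_closure (by simp)
  · cases b2
    · exact one_mem _
    · exact Subgroup.subset_closure (by simp)
  · cases b3
    · exact one_mem _
    · exact Subgroup.subset_closure (by simp)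
  · cases b4
    · exact one_mem _
    · exact Subgroup.subset_closure (by simp)
  · cases b5
    · exact one_mem _
    · exact Subgroup.subset_closure (by simp)

theorem gamma_range {σ : Equiv.Perm (ZMod 12)} (h : σ ∈ Gamma) : ∃ b, σ = f b := by
  unfold Gamma at h
  induction h using Subgroup.closure_induction with
  | mem x hx =>
    simp only [Set.mem_insert_iff, Set.mem_singleton_iff] at hx
    rcases hx with rfl | rfl | rfl | rfl | rfl
    · exact ⟨(true, false, false, false, false), by decide⟩
    · exact ⟨(false, true, false, false, false), by decide⟩
    · exact ⟨(false, false, true, false, false), by decide⟩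
    · exact ⟨(false, false, false, true, false), by decide⟩
    · exact ⟨(false, false, false, false, true), by decide⟩
  | one => exact ⟨(false, false, false, false, false), f_one.symm⟩
  | mul x y hx hy ihx ihy =>
    obtain ⟨b, rfl⟩ := ihx
    obtain ⟨c, rfl⟩ := ihy
    exact ⟨bx b c, fmul b c⟩
  | inv x hx ih =>
    obtain ⟨b, rfl⟩ := ih
    exact ⟨b, finv b⟩

def m (s : Finset (ZMod 12)) : B5 → Finset (ZMod 12) := fun b => s.image ⇑(f b)

def orbF (s : Finset (ZMod 12)) : Finset (Finset (ZMod 12)) := Finset.univ.image (m s)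

theorem orbit_eq (s : Finset (ZMod 12)) : gammaOrbit s = ↑(orbF s) := by
  ext u
  simp only [gammaOrbit, Set.mem_setOf_eq, orbF, Finset.mem_coe, Finset.mem_image]
  constructor
  · rintro ⟨σ, hσ, rfl⟩
    obtain ⟨b, rfl⟩ := gamma_range hσ
    exact ⟨b, Finset.mem_univ _, rfl⟩
  · rintro ⟨b, -, rfl⟩
    exact ⟨f b, f_mem b, rfl⟩

theorem natcard_orbit (s : Finset (ZMod 12)) :
    Nat.card (gammaOrbit s) = (orbF s).card := by
  rw [orbit_eq, Nat.card_coe_set_eq, Set.ncard_coe_finset]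

def s0 : Finset (ZMod 12) := {0, 1, 3, 5, 7, 8, 10}

theorem key : ∀ b : B5, m s0 b =
    ({0, cond b.1 2 1, cond b.2.1 4 3, cond b.2.2.1 6 5, 7, cond b.2.2.2.1 9 8,
      cond b.2.2.2.2 11 10} : Finset (ZMod 12)) := by decide

theorem orb0_sub : gammaOrbit s0 ⊆ thats := by
  rw [orbit_eq]
  intro u hu
  rcases Finset.mem_image.mp hu with ⟨b, -, rfl⟩
  exact ⟨cond b.1 2 1, cond b.2.1 4 3, cond b.2.2.1 6 5, cond b.2.2.2.1 9 8,
    cond b.2.2.2.2 11 10,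
    by cases b.1 <;> simp, by cases b.2.1 <;> simp, by cases b.2.2.1 <;> simp,
    by cases b.2.2.2.1 <;> simp, by cases b.2.2.2.2 <;> simp, key b⟩

theorem thats_sub_orb0 : thats ⊆ gammaOrbit s0 := by
  rintro u ⟨a₁, a₂, a₃, a₄, a₅, h₁, h₂, h₃, h₄, h₅, rfl⟩
  refine ⟨f (decide (a₁ = 2), decide (a₂ = 4), decide (a₃ = 6), decide (a₄ = 9),
    decide (a₅ = 11)), f_mem _, ?_⟩
  rcases h₁ with rfl | rfl <;> rcases h₂ with rfl | rfl <;> rcases h₃ with rfl | rfl <;>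
    rcases h₄ with rfl | rfl <;> rcases h₅ with rfl | rfl <;> decide

theorem orb0_eq : gammaOrbit s0 = thats := Set.Subset.antisymm orb0_sub thats_sub_orb0

theorem card_orb0 : Nat.card (gammaOrbit s0) = 32 := by
  rw [natcard_orbit]; decide

theorem image_swap_eq {a b : ZMod 12} {s : Finset (ZMod 12)} (hab : a ∈ s ↔ b ∈ s) :
    s.image ⇑(Equiv.swap a b) = s := by
  ext x
  simp only [Finset.mem_image]
  constructor
  · rintro ⟨y, hy, rfl⟩
    by_cases h1 : y = a
    · subst h1; rw [Equiv.swap_apply_left]; exact hab.mp hy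
    by_cases h2 : y = b
    · subst h2; rw [Equiv.swap_apply_right]; exact hab.mpr hy
    · rw [Equiv.swap_apply_of_ne_of_ne h1 h2]; exact hy
  · intro hx
    refine ⟨Equiv.swap a b x, ?_, Equiv.swap_apply_self a b x⟩
    by_cases h1 : x = a
    · subst h1; rw [Equiv.swap_apply_left]; exact hab.mp hx
    by_cases h2 : x = b
    · subst h2; rw [Equiv.swap_apply_right]; exact hab.mpr hx
    · rw [Equiv.swap_apply_of_ne_of_ne h1 h2]; exact hx

theorem orbit_image {s : Finset (ZMod 12)} {σ : Equiv.Perm (ZMod 12)} (hσ : σ ∈ Gamma) :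
    gammaOrbit (s.image ⇑σ) = gammaOrbit s := by
  ext u
  constructor
  · rintro ⟨τ, hτ, rfl⟩
    exact ⟨τ * σ, mul_mem hτ hσ, by rw [Finset.image_image, ← Equiv.Perm.coe_mul]⟩
  · rintro ⟨τ, hτ, rfl⟩
    exact ⟨τ * σ⁻¹, mul_mem hτ (inv_mem hσ),
      by rw [Finset.image_image, ← Equiv.Perm.coe_mul, inv_mul_cancel_right]⟩

theorem card7le (a b c d e : ZMod 12) :
    ({0, a, b, c, 7, d, e} : Finset (ZMod 12)).card ≤ 7 := by
  refine (Finset.card_insert_le _ _).trans (Nat.add_le_add_right ?_ 1)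
  refine (Finset.card_insert_le _ _).trans (Nat.add_le_add_right ?_ 1)
  refine (Finset.card_insert_le _ _).trans (Nat.add_le_add_right ?_ 1)
  refine (Finset.card_insert_le _ _).trans (Nat.add_le_add_right ?_ 1)
  refine (Finset.card_insert_le _ _).trans (Nat.add_le_add_right ?_ 1)
  refine (Finset.card_insert_le _ _).trans (Nat.add_le_add_right ?_ 1)
  simp

/-- Any maximal Γ-orbit of T₇ equals the set of the 32 thāts, which has 32 elements. -/
theorem gamma_maximal_orbit_eq_thats :
    (∀ s : Finset (ZMod 12), 0 ∈ s → s.card = 7 →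
      (∀ t : Finset (ZMod 12), 0 ∈ t → t.card = 7 →
        Nat.card (gammaOrbit t) ≤ Nat.card (gammaOrbit s)) →
      gammaOrbit s = thats) ∧
    Nat.card thats = 32 := by
  constructor
  · intro s h0 hc hmax
    have hle : 32 ≤ (orbF s).card := by
      have h := hmax s0 (by decide) (by decide)
      rwa [card_orb0, natcard_orbit] at h
    have hge : (orbF s).card ≤ 32 :=
      le_trans Finset.card_image_le (le_of_eq (by decide))
    have hcard : (orbF s).card = 32 := le_antisymm hge hle
    have hinj : Set.InjOn (m s) ↑(Finset.univ : Finset B5) :=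
      Finset.injOn_of_card_image_eq
        (hcard.trans (by decide : (Finset.univ : Finset B5).card = 32).symm)
    have pairNe : ∀ (bv : B5) (a b : ZMod 12), bv ≠ (false, false, false, false, false) →
        f bv = Equiv.swap a b → ¬(a ∈ s ↔ b ∈ s) := by
      intro bv a b hne hf h
      apply hne
      apply hinj (Finset.mem_coe.mpr (Finset.mem_univ _)) (Finset.mem_coe.mpr (Finset.mem_univ _))
      show s.image ⇑(f bv) = s.image ⇑(f (false, false, false, false, false))
      rw [hf, f_one, image_swap_eq h]
      simp
    have h12 := pairNe (true, false, false, false, false) 1 2 (by decide) (by decide)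
    have h34 := pairNe (false, true, false, false, false) 3 4 (by decide) (by decide)
    have h56 := pairNe (false, false, true, false, false) 5 6 (by decide) (by decide)
    have h89 := pairNe (false, false, false, true, false) 8 9 (by decide) (by decide)
    have h1011 := pairNe (false, false, false, false, true) 10 11 (by decide) (by decide)
    have hsthats : s ∈ thats := by
      refine ⟨if (1 : ZMod 12) ∈ s then 1 else 2, if (3 : ZMod 12) ∈ s then 3 else 4,
        if (5 : ZMod 12) ∈ s then 5 else 6, if (8 : ZMod 12) ∈ s then 8 else 9,
        if (10 : ZMod 12) ∈ s then 10 else 11,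
        ?_, ?_, ?_, ?_, ?_, ?_⟩
      · split_ifs <;> simp
      · split_ifs <;> simp
      · split_ifs <;> simp
      · split_ifs <;> simp
      · split_ifs <;> simp
      · refine Finset.eq_of_subset_of_card_le ?_ (le_trans (card7le _ _ _ _ _) (le_of_eq hc.symm))
        intro x hx
        have h12' : ∀ y : ZMod 12, y = 0 ∨ y = 1 ∨ y = 2 ∨ y = 3 ∨ y = 4 ∨ y = 5 ∨ y = 6 ∨
            y = 7 ∨ y = 8 ∨ y = 9 ∨ y = 10 ∨ y = 11 := by decide
        rcases h12' x with rfl | rfl | rfl | rfl | rfl | rfl | rfl | rfl | rfl | rfl | rfl | rfl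
        · simp
        · simp [hx]
        · have h1 : (1 : ZMod 12) ∉ s := fun h => h12 ⟨fun _ => hx, fun _ => h⟩
          simp [h1]
        · simp [hx]
        · have h1 : (3 : ZMod 12) ∉ s := fun h => h34 ⟨fun _ => hx, fun _ => h⟩
          simp [h1]
        · simp [hx]
        · have h1 : (5 : ZMod 12) ∉ s := fun h => h56 ⟨fun _ => hx, fun _ => h⟩
          simp [h1]
        · simp
        · simp [hx]
        · have h1 : (8 : ZMod 12) ∉ s := fun h => h89 ⟨fun _ => hx, fun _ => h⟩
          simp [h1]
        · simp [hx]
        · have h1 : (10 : ZMod 12) ∉ s := fun h => h1011 ⟨fun _ => hx, fun _ => h⟩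
          simp [h1]
    obtain ⟨σ, hσ, hs⟩ := thats_sub_orb0 hsthats
    rw [hs, orbit_image hσ, orb0_eq]
  · rw [← orb0_eq, card_orb0]
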